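/- arXiv:1704.08984 — 5 statements merged into one kernel-verified Lean document; each statement's English description precedes it below -/
import Mathlib

section
/- Let A be a contraction on a Hilbert space H with defect spaces D_A = closure of range(I − A*A) and D_{A*} = closure of range(I − AA*), with orthogonal projections P_{D_A} and P_{D_{A*}}. A bounded operator T on H satisfies ⟨Tx, y⟩ = ⟨TAx, Ay⟩ for all x, y ∈ ker(I − A*A) if and only if there exist bounded operators X, Y on H such that T − A*TA = X P_{D_A} + P_{D_A} Y. -/
noncomputable section

/-- The orthogonal projection of `H` onto the closure of the range of a bounded operator
`B : H →L[ℂ] H`, viewed as an operator on `H`. -/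
def projClosureRange {H : Type*} [NormedAddCommGroup H] [InnerProductSpace ℂ H]
    [CompleteSpace H] (B : H →L[ℂ] H) : H →L[ℂ] H :=
  letI K0 : Submodule ℂ H := LinearMap.range (B : H →ₗ[ℂ] H)
  haveI : CompleteSpace K0.topologicalClosure :=
    (Submodule.isClosed_topologicalClosure K0).completeSpace_coe
  K0.topologicalClosure.subtypeL.comp (Submodule.orthogonalProjection K0.topologicalClosure)

/-- Let `A` be a contraction on a complex Hilbert space `H`, and let `P_{D_A}` be the
orthogonal projection onto the defect space `D_A = closure (range (I - A*A))`.  A bounded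
operator `T` satisfies `⟪Tx, y⟫ = ⟪TAx, Ay⟫` for all `x, y ∈ ker (I - A*A)` (i.e. `T` is
`A`-invariant) if and only if there exist bounded operators `X, Y` on `H` with
`T - A*TA = X P_{D_A} + P_{D_A} Y`. -/
theorem stmt_2 {H : Type*} [NormedAddCommGroup H] [InnerProductSpace ℂ H] [CompleteSpace H]
    (A T : H →L[ℂ] H) (hA : ‖A‖ ≤ 1) :
    (∀ x y : H, ContinuousLinearMap.adjoint A (A x) = x →
        ContinuousLinearMap.adjoint A (A y) = y →
        (inner ℂ y (T x) : ℂ) = inner ℂ (A y) (T (A x))) ↔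
      ∃ X Y : H →L[ℂ] H,
        T - (ContinuousLinearMap.adjoint A).comp (T.comp A) =
          X.comp (projClosureRange (1 - (ContinuousLinearMap.adjoint A).comp A)) +
          (projClosureRange (1 - (ContinuousLinearMap.adjoint A).comp A)).comp Y := by
  classical
  set D : H →L[ℂ] H := 1 - (ContinuousLinearMap.adjoint A).comp A with hDdef
  set K : Submodule ℂ H := (LinearMap.range (D : H →ₗ[ℂ] H)).topologicalClosure with hKdef
  haveI : CompleteSpace K := (Submodule.isClosed_topologicalClosure _).completeSpace_coe
  rw [show projClosureRange D = K.subtypeL.comp (Submodule.orthogonalProjection K) from rfl]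
  set P : H →L[ℂ] H := K.subtypeL.comp (Submodule.orthogonalProjection K) with hPdef
  set S : H →L[ℂ] H := T - (ContinuousLinearMap.adjoint A).comp (T.comp A) with hSdef
  -- D is self-adjoint
  have hDsa : IsSelfAdjoint D := by
    rw [hDdef]
    refine IsSelfAdjoint.sub (IsSelfAdjoint.one _) ?_
    rw [IsSelfAdjoint, ContinuousLinearMap.star_eq_adjoint, ContinuousLinearMap.adjoint_comp,
      ContinuousLinearMap.adjoint_adjoint]
  -- orthogonal complement of K
  haveI : CompleteSpace ((LinearMap.range (D : H →ₗ[ℂ] H))ᗮ : Submodule ℂ H) :=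
    (Submodule.isClosed_orthogonal _).completeSpace_coe
  haveI : Submodule.HasOrthogonalProjection ((LinearMap.range (D : H →ₗ[ℂ] H))ᗮ) :=
    Submodule.HasOrthogonalProjection.ofCompleteSpace _
  have hKo : Kᗮ = (LinearMap.range (D : H →ₗ[ℂ] H))ᗮ := by
    rw [hKdef, ← Submodule.orthogonal_orthogonal_eq_closure, Submodule.orthogonal_orthogonal]
  have hDinner : ∀ z x : H, (inner ℂ (D z) x : ℂ) = inner ℂ z (D x) := by
    intro z x
    conv_lhs => rw [← hDsa.adjoint_eq]
    rw [ContinuousLinearMap.adjoint_inner_left]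
  -- characterization of the kernel
  have hker : ∀ x : H, ContinuousLinearMap.adjoint A (A x) = x ↔ x ∈ Kᗮ := by
    intro x
    rw [hKo, Submodule.mem_orthogonal]
    constructor
    · intro h u hu
      obtain ⟨z, rfl⟩ := hu
      have hDx : D x = 0 := by
        simp only [hDdef, ContinuousLinearMap.sub_apply, ContinuousLinearMap.one_apply,
          ContinuousLinearMap.comp_apply, h, sub_self]
      rw [ContinuousLinearMap.coe_coe, hDinner, hDx, inner_zero_right]
    · intro h
      have h1 : (inner ℂ (D x) (D x) : ℂ) = 0 := by
        rw [← hDinner]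
        exact h (D (D x)) ⟨D x, rfl⟩
      have hDx : D x = 0 := inner_self_eq_zero.mp h1
      have := hDx
      simp only [hDdef, ContinuousLinearMap.sub_apply, ContinuousLinearMap.one_apply,
        ContinuousLinearMap.comp_apply, sub_eq_zero] at this
      exact this.symm
  -- basic properties of P
  have hPzero : ∀ x ∈ Kᗮ, P x = 0 := by
    intro x hx
    simp [hPdef, Submodule.orthogonalProjectionOnto_apply_of_mem_orthogonal hx]
  have hPmem : ∀ x ∈ K, P x = x := by
    intro x hx
    rw [hPdef]
    exact Submodule.starProjection_eq_self_iff.mpr hx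
  have hPsa : IsSelfAdjoint P := isSelfAdjoint_starProjection K
  constructor
  · intro h
    refine ⟨(1 - P).comp S, S, ?_⟩
    show S = ((1 - P).comp S).comp P + P.comp S
    ext x
    have hw : x - P x ∈ Kᗮ := K.sub_starProjection_mem_orthogonal x
    set w : H := x - P x with hwdef
    have hAw : ContinuousLinearMap.adjoint A (A w) = w := (hker w).mpr hw
    -- S w ∈ K
    have hSw : S w ∈ K := by
      rw [hKdef, ← Submodule.orthogonal_orthogonal_eq_closure, ← hKo]
      intro y hy
      have hAy : ContinuousLinearMap.adjoint A (A y) = y := (hker y).mpr hy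
      have := h w y hAw hAy
      have h2 : (inner ℂ (A y) (T (A w)) : ℂ) = inner ℂ y ((ContinuousLinearMap.adjoint A) (T (A w))) := by
        rw [ContinuousLinearMap.adjoint_inner_right]
      simp only [hSdef, ContinuousLinearMap.sub_apply, ContinuousLinearMap.comp_apply,
        inner_sub_right]
      rw [← h2, ← this, sub_self]
    have hPSw : P (S w) = S w := hPmem _ hSw
    have hx : x = P x + w := by rw [hwdef]; abel
    simp only [ContinuousLinearMap.add_apply, ContinuousLinearMap.comp_apply,
      ContinuousLinearMap.sub_apply, ContinuousLinearMap.one_apply]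
    calc S x = S (P x + w) := by rw [← hx]
      _ = S (P x) + S w := by rw [map_add]
      _ = (S (P x) - P (S (P x))) + (P (S (P x)) + P (S w)) := by rw [hPSw]; abel
      _ = (S (P x) - P (S (P x))) + P (S (P x) + S w) := by rw [map_add]
      _ = (S (P x) - P (S (P x))) + P (S x) := by rw [← map_add, ← hx]
  · rintro ⟨X, Y, hXY⟩ x y hx hy
    have hx' : x ∈ Kᗮ := (hker x).mp hx
    have hy' : y ∈ Kᗮ := (hker y).mp hy
    have hSx : S x = X (P x) + P (Y x) := by
      rw [hXY]; rfl
    have h0 : (inner ℂ y (S x) : ℂ) = 0 := by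
      rw [hSx, hPzero x hx', map_zero, zero_add]
      have : (inner ℂ y (P (Y x)) : ℂ) = inner ℂ (P y) (Y x) := by
        conv_rhs => rw [← hPsa.adjoint_eq]
        rw [ContinuousLinearMap.adjoint_inner_left]
      rw [this, hPzero y hy', inner_zero_left]
    have h1 : (inner ℂ (A y) (T (A x)) : ℂ) = inner ℂ y ((ContinuousLinearMap.adjoint A) (T (A x))) := by
      rw [ContinuousLinearMap.adjoint_inner_right]
    simp only [hSdef, ContinuousLinearMap.sub_apply, ContinuousLinearMap.comp_apply,
      inner_sub_right] at h0
    rw [h1]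
    linear_combination h0
end
end

section
/- Let A be a contraction on a Hilbert space H. A bounded operator T is A-invariant (meaning ⟨Tx, y⟩ = ⟨TAx, Ay⟩ for all x, y ∈ ker(I − A*A)) if and only if T is A*-invariant (meaning ⟨Tu, v⟩ = ⟨TA*u, A*v⟩ for all u, v ∈ ker(I − AA*)). -/
/-- Let `A` be a contraction on a complex Hilbert space `H`.  A bounded operator `T` is
`A`-invariant (i.e. `⟪Tx, y⟫ = ⟪TAx, Ay⟫` for all `x, y ∈ ker (I - A*A)`) if and only if
`T` is `A*`-invariant (i.e. `⟪Tu, v⟫ = ⟪TA*u, A*v⟫` for all `u, v ∈ ker (I - AA*)`). -/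
theorem stmt_3 {H : Type*} [NormedAddCommGroup H] [InnerProductSpace ℂ H] [CompleteSpace H]
    (A T : H →L[ℂ] H) (hA : ‖A‖ ≤ 1) :
    (∀ x y : H, ContinuousLinearMap.adjoint A (A x) = x →
        ContinuousLinearMap.adjoint A (A y) = y →
        (inner ℂ y (T x) : ℂ) = inner ℂ (A y) (T (A x))) ↔
    (∀ u v : H, A (ContinuousLinearMap.adjoint A u) = u →
        A (ContinuousLinearMap.adjoint A v) = v →
        (inner ℂ v (T u) : ℂ) =
          inner ℂ (ContinuousLinearMap.adjoint A v) (T (ContinuousLinearMap.adjoint A u))) := by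
  constructor
  · intro h u v hu hv
    have := h (ContinuousLinearMap.adjoint A u) (ContinuousLinearMap.adjoint A v)
      (by rw [hu]) (by rw [hv])
    rw [hu, hv] at this
    exact this.symm
  · intro h x y hx hy
    have := h (A x) (A y) (by rw [hx]) (by rw [hy])
    rw [hx, hy] at this
    exact this.symm
end

section
/- Let A be a contraction on a Hilbert space H such that I − A*A = k̃⊗k̃ and I − AA* = k⊗k for unit-norm-scaled vectors k, k̃ ∈ H (where (v⊗w)h = ⟨h,w⟩v). Then a bounded operator T on H is A-invariant if and only if there exist vectors v, w ∈ H such that T − ATA* = v⊗k + k⊗w. -/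
noncomputable section

/-- The rank-one operator `v ⊗ w : h ↦ ⟨h, w⟩ v` (inner ℂ product linear in `h`,
conjugate-linear in `w`, as in the paper). -/
def rankOne {H : Type*} [NormedAddCommGroup H] [InnerProductSpace ℂ H]
    (v w : H) : H →L[ℂ] H :=
  (innerSL ℂ w).smulRight v

lemma rankOne_apply {H : Type*} [NormedAddCommGroup H] [InnerProductSpace ℂ H]
    (v w h : H) : rankOne v w h = (inner ℂ w h : ℂ) • v := rfl

/-- Let `A` be a contraction on a complex Hilbert space `H` whose defect operators are
rank one: `I - A*A = k̃ ⊗ k̃` and `I - AA* = k ⊗ k` for vectors `k, k̃ ∈ H`.  Then a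
bounded operator `T` on `H` is `A`-invariant (`⟪Tx, y⟫ = ⟪TAx, Ay⟫` for all
`x, y ∈ ker (I - A*A)`) if and only if there exist vectors `v, w ∈ H` such that
`T - ATA* = v ⊗ k + k ⊗ w`. -/
theorem stmt_4 {H : Type*} [NormedAddCommGroup H] [InnerProductSpace ℂ H] [CompleteSpace H]
    (A T : H →L[ℂ] H) (hA : ‖A‖ ≤ 1) (k ktilde : H)
    (hdef1 : (1 : H →L[ℂ] H) - (ContinuousLinearMap.adjoint A).comp A = rankOne ktilde ktilde)
    (hdef2 : (1 : H →L[ℂ] H) - A.comp (ContinuousLinearMap.adjoint A) = rankOne k k) :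
    (∀ x y : H, ContinuousLinearMap.adjoint A (A x) = x →
        ContinuousLinearMap.adjoint A (A y) = y →
        (inner ℂ y (T x) : ℂ) = inner ℂ (A y) (T (A x))) ↔
      ∃ v w : H,
        T - A.comp (T.comp (ContinuousLinearMap.adjoint A)) = rankOne v k + rankOne k w := by
  set A' := ContinuousLinearMap.adjoint A with hA'def
  have hd1 : ∀ x : H, x - A' (A x) = (inner ℂ ktilde x : ℂ) • ktilde := by
    intro x
    have := ContinuousLinearMap.ext_iff.mp hdef1 x
    simpa [rankOne_apply, ContinuousLinearMap.sub_apply, ContinuousLinearMap.comp_apply,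
      ContinuousLinearMap.one_apply] using this
  have hd2 : ∀ x : H, x - A (A' x) = (inner ℂ k x : ℂ) • k := by
    intro x
    have := ContinuousLinearMap.ext_iff.mp hdef2 x
    simpa [rankOne_apply, ContinuousLinearMap.sub_apply, ContinuousLinearMap.comp_apply,
      ContinuousLinearMap.one_apply] using this
  constructor
  · -- forward direction
    intro hinv
    set S : H →L[ℂ] H := T - A'.comp (T.comp A) with hSdef
    have hSapp : ∀ g : H, S g = T g - A' (T (A g)) := fun g => rfl
    have hSinner : ∀ u y : H, (inner ℂ ktilde u : ℂ) = 0 → (inner ℂ ktilde y : ℂ) = 0 →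
        (inner ℂ y (S u) : ℂ) = 0 := by
      intro u y hu hy
      have hxu : A' (A u) = u := by
        have h1 := hd1 u
        rw [hu, zero_smul, sub_eq_zero] at h1
        exact h1.symm
      have hxy : A' (A y) = y := by
        have h1 := hd1 y
        rw [hy, zero_smul, sub_eq_zero] at h1
        exact h1.symm
      have h2 := hinv u y hxu hxy
      rw [hSapp, inner_sub_right, h2, hA'def, ContinuousLinearMap.adjoint_inner_right, sub_self]
    have e1 : ∀ h : H, A (A' h) = h - (inner ℂ k h : ℂ) • k := by
      intro h
      rw [← hd2 h]; abel
    have eATu : ∀ h : H, A (T (A' h)) = A (S (A' h)) + T h - (inner ℂ k h : ℂ) • T k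
        - (inner ℂ k (T h) : ℂ) • k + ((inner ℂ k h : ℂ) * (inner ℂ k (T k) : ℂ)) • k := by
      intro h
      have eTu : T (A' h) = S (A' h) + A' (T (A (A' h))) := by rw [hSapp]; abel
      have eAAT : A (A' (T (A (A' h)))) = T (A (A' h)) - (inner ℂ k (T (A (A' h))) : ℂ) • k := by
        rw [← hd2 (T (A (A' h)))]; abel
      rw [eTu, map_add, eAAT, e1 h, map_sub, map_smul, inner_sub_right, inner_smul_right]
      module
    by_cases hk : ktilde = 0
    · -- A is an isometry, S = 0
      have hS0 : ∀ g : H, S g = 0 := by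
        intro g
        have := hSinner g (S g) (by simp [hk]) (by simp [hk])
        exact inner_self_eq_zero.mp this
      refine ⟨T k - (inner ℂ k (T k) : ℂ) • k, ContinuousLinearMap.adjoint T k, ?_⟩
      ext h
      rw [ContinuousLinearMap.sub_apply, ContinuousLinearMap.comp_apply,
        ContinuousLinearMap.comp_apply, ContinuousLinearMap.add_apply, rankOne_apply,
        rankOne_apply, eATu h, hS0, map_zero, ContinuousLinearMap.adjoint_inner_left]
      module
    · -- genuinely rank-one defect case
      set c : ℂ := (‖ktilde‖ : ℂ) ^ 2 with hc
      have hkk : (inner ℂ ktilde ktilde : ℂ) = c := inner_self_eq_norm_sq_to_K ktilde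
      have hc0 : c ≠ 0 := by
        simp only [hc, ne_eq, pow_eq_zero_iff, Complex.ofReal_eq_zero, norm_eq_zero]
        simp [hk]
      have hcconj : starRingEnd ℂ c = c := by
        simp [hc, ← Complex.ofReal_pow]
      have key : ∀ u : H, (inner ℂ ktilde u : ℂ) = 0 →
          S u = ((inner ℂ ktilde (S u) : ℂ) / c) • ktilde := by
        intro u hu
        set r := S u - ((inner ℂ ktilde (S u) : ℂ) / c) • ktilde with hr
        have hrk : (inner ℂ ktilde r : ℂ) = 0 := by
          rw [hr, inner_sub_right, inner_smul_right, hkk, div_mul_cancel₀ _ hc0, sub_self]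
        have h1 : (inner ℂ r (S u) : ℂ) = 0 := hSinner u r hu hrk
        have hrkt : (inner ℂ r ktilde : ℂ) = 0 := by
          rw [← inner_conj_symm, hrk, map_zero]
        have h2 : (inner ℂ r r : ℂ) = 0 := by
          nth_rewrite 2 [hr]
          rw [inner_sub_right, inner_smul_right, h1, hrkt, mul_zero, sub_zero]
        have h3 : r = 0 := inner_self_eq_zero.mp h2
        rw [hr, sub_eq_zero] at h3
        exact h3
      -- A ktilde is a multiple of k
      set μ : ℂ := (inner ℂ k (A ktilde) : ℂ) / c with hμ
      have hAk : A ktilde = μ • k := by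
        have e2 : A ktilde - A (A' (A ktilde)) = (inner ℂ k (A ktilde) : ℂ) • k := hd2 (A ktilde)
        have e3 : A ktilde - A (A' (A ktilde)) = c • A ktilde := by
          have := congrArg A (hd1 ktilde)
          rw [map_sub, map_smul, hkk] at this
          exact this
        have e4 : c • A ktilde = (inner ℂ k (A ktilde) : ℂ) • k := by rw [← e3, e2]
        calc A ktilde = c⁻¹ • (c • A ktilde) := by
              rw [smul_smul, inv_mul_cancel₀ hc0, one_smul]
          _ = c⁻¹ • ((inner ℂ k (A ktilde) : ℂ) • k) := by rw [e4]
          _ = μ • k := by rw [smul_smul, hμ, div_eq_inv_mul]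
      -- the key computation of A (S (A' h))
      have hASu : ∀ h : H, A (S (A' h)) =
          ((μ / c) * (inner ℂ (A (ContinuousLinearMap.adjoint S ktilde)) h : ℂ)) • k
          - ((μ * starRingEnd ℂ μ * (inner ℂ ktilde (S ktilde) : ℂ) / (c * c))
              * (inner ℂ k h : ℂ)) • k
          + ((starRingEnd ℂ μ / c) * (inner ℂ k h : ℂ)) • A (S ktilde) := by
        intro h
        have ht : (inner ℂ ktilde (A' h) : ℂ) = starRingEnd ℂ μ * (inner ℂ k h : ℂ) := by
          rw [hA'def, ContinuousLinearMap.adjoint_inner_right, hAk, inner_smul_left]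
        have hu0 : (inner ℂ ktilde
            (A' h - ((starRingEnd ℂ μ * (inner ℂ k h : ℂ)) / c) • ktilde) : ℂ) = 0 := by
          rw [inner_sub_right, inner_smul_right, hkk, div_mul_cancel₀ _ hc0, ht, sub_self]
        have hSu : S (A' h) = S (A' h - ((starRingEnd ℂ μ * (inner ℂ k h : ℂ)) / c) • ktilde)
            + ((starRingEnd ℂ μ * (inner ℂ k h : ℂ)) / c) • S ktilde := by
          rw [map_sub, map_smul]; abel
        have hinner0 : (inner ℂ ktilde
            (S (A' h - ((starRingEnd ℂ μ * (inner ℂ k h : ℂ)) / c) • ktilde)) : ℂ)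
            = (inner ℂ (A (ContinuousLinearMap.adjoint S ktilde)) h : ℂ)
              - ((starRingEnd ℂ μ * (inner ℂ k h : ℂ)) / c) * (inner ℂ ktilde (S ktilde) : ℂ) := by
          rw [map_sub, map_smul, inner_sub_right, inner_smul_right]
          congr 1
          rw [← ContinuousLinearMap.adjoint_inner_left S, hA'def,
            ContinuousLinearMap.adjoint_inner_right]
        have step1 : A (S (A' h)) =
            ((inner ℂ ktilde
              (S (A' h - ((starRingEnd ℂ μ * (inner ℂ k h : ℂ)) / c) • ktilde)) : ℂ) / c)
                • (μ • k)
            + ((starRingEnd ℂ μ * (inner ℂ k h : ℂ)) / c) • A (S ktilde) := by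
          conv_lhs => rw [hSu, map_add, map_smul, key _ hu0, map_smul, hAk]
        rw [step1, hinner0, smul_smul]
        clear_value S c μ
        match_scalars <;> ring
      have hconjμc : starRingEnd ℂ (starRingEnd ℂ μ / c) = μ / c := by
        rw [map_div₀, Complex.conj_conj, hcconj]
      refine ⟨T k - (inner ℂ k (T k) : ℂ) • k
          + (μ * starRingEnd ℂ μ * (inner ℂ ktilde (S ktilde) : ℂ) / (c * c)) • k
          - (starRingEnd ℂ μ / c) • A (S ktilde),
        ContinuousLinearMap.adjoint T k
          - (starRingEnd ℂ μ / c) • A (ContinuousLinearMap.adjoint S ktilde), ?_⟩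
      ext h
      rw [ContinuousLinearMap.sub_apply, ContinuousLinearMap.comp_apply,
        ContinuousLinearMap.comp_apply, ContinuousLinearMap.add_apply, rankOne_apply,
        rankOne_apply, eATu h, hASu h, inner_sub_left, inner_smul_left, hconjμc,
        ContinuousLinearMap.adjoint_inner_left]
      clear_value S c μ
      clear hd1 hd2 hinv hSapp hSinner e1 eATu key hAk hASu hconjμc hkk hcconj hdef1 hdef2
      match_scalars <;> ring
  · -- backward direction
    rintro ⟨v, w, hvw⟩ x y hx hy
    have hvw' : ∀ h : H, T h - A (T (A' h)) =
        (inner ℂ k h : ℂ) • v + (inner ℂ w h : ℂ) • k := by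
      intro h
      have := ContinuousLinearMap.ext_iff.mp hvw h
      simpa [rankOne_apply, ContinuousLinearMap.sub_apply, ContinuousLinearMap.comp_apply,
        ContinuousLinearMap.add_apply] using this
    have hkz : ∀ z : H, A' (A z) = z → (inner ℂ k (A z) : ℂ) = 0 := by
      intro z hz
      have h1 := hd2 (A z)
      rw [hz, sub_self] at h1
      rcases (smul_eq_zero.mp h1.symm) with h | h
      · exact h
      · simp [h]
    have hkAx := hkz x hx
    have hkAy := hkz y hy
    have hTAx : T (A x) = A (T x) + (inner ℂ w (A x) : ℂ) • k := by
      have h1 := hvw' (A x)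
      rw [hx, hkAx, zero_smul, zero_add] at h1
      rw [← h1]; abel
    rw [hTAx, inner_add_right, inner_smul_right]
    have hAyk : (inner ℂ (A y) k : ℂ) = 0 := by
      rw [← inner_conj_symm, hkAy, map_zero]
    rw [hAyk, mul_zero, add_zero, ← ContinuousLinearMap.adjoint_inner_left A, ← hA'def, hy]
end
end

section
/- Let u be a measurable function on 𝕋 with |u| ≤ 1 a.e., Δ = (1−|u|²)^{1/2}, and let K = L² ⊕ closure(ΔL²). Define C(f⊕g) = (χ̄ u f̄ + χ̄ Δ ḡ) ⊕ (χ̄ Δ f̄ − χ̄ ū ḡ), where χ(ζ)=ζ. Then C is a conjugation on K (conjugate-linear isometric involution), and the multiplication operator U(f⊕g) = χf ⊕ χg satisfies CU = U*C. -/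
open MeasureTheory Complex

open Filter Topology

open scoped ENNReal NNReal

noncomputable section

instance : Fact (0 < 2 * Real.pi) := ⟨Real.two_pi_pos⟩

/-- The unit circle, realized as `ℝ / 2πℤ`. -/
abbrev Circ := AddCircle (2 * Real.pi)

/-- Normalized arclength (Haar probability) measure on the circle. -/
abbrev mC : Measure Circ := AddCircle.haarAddCircle

/-- The coordinate function `χ(ζ) = ζ` on the circle. -/
abbrev chi : Circ → ℂ := fun z => fourier 1 z

/-- For a function `d : 𝕋 → ℝ`, the closure in `L²(𝕋)` of `d · L²`. -/
def closDL2 (d : Circ → ℝ) : Set (Lp ℂ 2 mC) :=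
  closure {x : Lp ℂ 2 mC | ∃ h : Lp ℂ 2 mC, ⇑x =ᵐ[mC] fun z => (d z : ℂ) * h z}

lemma chi_conj_mul (z : Circ) : (starRingEnd ℂ) (chi z) * chi z = 1 := by
  have h : ‖chi z‖ = 1 := by
    rw [show chi z = fourier 1 z from rfl, fourier_apply]; exact Circle.norm_coe _
  rw [← Complex.normSq_eq_conj_mul_self, Complex.normSq_eq_norm_sq, h]
  norm_num

lemma chi_norm (z : Circ) : ‖chi z‖ = 1 := by
  rw [show chi z = fourier 1 z from rfl, fourier_apply]
  exact Circle.norm_coe _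

lemma tendsto_eLpNorm_two (φ : ℕ → Circ → ℂ) (b : Circ → ℂ)
    (hφm : ∀ n, AEStronglyMeasurable (φ n) mC) (hb : MemLp b 2 mC)
    (hdom : ∀ n, ∀ᵐ z ∂mC, ‖φ n z‖ ≤ ‖b z‖)
    (hlim : ∀ᵐ z ∂mC, Tendsto (fun n => φ n z) atTop (𝓝 0)) :
    Tendsto (fun n => eLpNorm (φ n) 2 mC) atTop (𝓝 0) := by
  have hbfin : (∫⁻ z, (‖b z‖₊ : ℝ≥0∞) ^ (2:ℝ) ∂mC) ≠ ⊤ := by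
    have h2 := hb.2
    rw [eLpNorm_eq_lintegral_rpow_enorm_toReal (by norm_num) (by norm_num)] at h2
    simp only [ENNReal.toReal_ofNat, enorm_eq_nnnorm] at h2
    intro h
    rw [h] at h2
    simp [ENNReal.top_rpow_of_pos] at h2
  have key : Tendsto (fun n => ∫⁻ z, (‖φ n z‖₊ : ℝ≥0∞) ^ (2:ℝ) ∂mC) atTop (𝓝 0) := by
    have h0 : (0:ℝ≥0∞) = ∫⁻ _z, (0:ℝ≥0∞) ∂mC := by simp
    rw [h0]
    refine tendsto_lintegral_of_dominated_convergence' (fun z => (‖b z‖₊ : ℝ≥0∞) ^ (2:ℝ))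
      (fun n => (hφm n).enorm.pow_const _) (fun n => ?_) hbfin ?_
    · filter_upwards [hdom n] with z hz
      gcongr
      exact_mod_cast hz
    · filter_upwards [hlim] with z hz
      have h1 : Tendsto (fun n => (‖φ n z‖₊ : ℝ≥0∞)) atTop (𝓝 0) := by
        rw [← ENNReal.coe_zero]
        exact ENNReal.tendsto_coe.2 (by simpa [Function.comp_def] using (continuous_nnnorm.tendsto (0:ℂ)).comp hz)
      have := ((ENNReal.continuous_rpow_const (y := (2:ℝ))).tendsto 0).comp h1
      simpa [Function.comp_def, ENNReal.zero_rpow_of_pos (by norm_num : (0:ℝ) < 2)] using this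
  have h3 : Tendsto (fun n => (∫⁻ z, (‖φ n z‖₊ : ℝ≥0∞) ^ (2:ℝ) ∂mC) ^ (1/(2:ℝ)))
      atTop (𝓝 0) := by
    have := ((ENNReal.continuous_rpow_const (y := 1/(2:ℝ))).tendsto 0).comp key
    simpa [Function.comp_def, ENNReal.zero_rpow_of_pos (by norm_num : (0:ℝ) < 1/2)] using this
  refine h3.congr fun n => ?_
  rw [eLpNorm_eq_lintegral_rpow_enorm_toReal (by norm_num) (by norm_num)]
  norm_num [enorm_eq_nnnorm]

lemma mem_closDL2 (d : Circ → ℝ) (hd : AEMeasurable d mC) (F : Circ → ℂ)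
    (hFm : AEStronglyMeasurable F mC) (A : Circ → ℂ) (hA : MemLp A 2 mC)
    (hAF : A =ᵐ[mC] fun z => (d z : ℂ) * F z) : hA.toLp A ∈ closDL2 d := by
  set F' := hFm.mk F with hF'def
  have hF'm : StronglyMeasurable F' := hFm.stronglyMeasurable_mk
  have hFF' : F =ᵐ[mC] F' := hFm.ae_eq_mk
  have hAF' : A =ᵐ[mC] fun z => (d z : ℂ) * F' z := by
    filter_upwards [hAF, hFF'] with z h1 h2
    rw [h1, h2]
  set h : ℕ → Circ → ℂ := fun n z => if ‖F' z‖ ≤ (n:ℝ) then F' z else 0 with hdef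
  have hhm : ∀ n, StronglyMeasurable (h n) := fun n =>
    StronglyMeasurable.ite (measurableSet_le hF'm.measurable.norm measurable_const)
      hF'm stronglyMeasurable_const
  have hhb : ∀ n z, ‖h n z‖ ≤ (n:ℝ) := by
    intro n z
    show ‖if ‖F' z‖ ≤ (n:ℝ) then F' z else 0‖ ≤ _
    split_ifs with hc
    · exact hc
    · simp
  have hhF' : ∀ n z, ‖h n z‖ ≤ ‖F' z‖ := by
    intro n z
    show ‖if ‖F' z‖ ≤ (n:ℝ) then F' z else 0‖ ≤ _
    split_ifs with hc
    · exact le_refl _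
    · simp
  have hhℒ : ∀ n, MemLp (h n) 2 mC := fun n =>
    MemLp.of_bound (hhm n).aestronglyMeasurable _ (Eventually.of_forall (hhb n))
  set dh : ℕ → Circ → ℂ := fun n z => (d z : ℂ) * h n z with dhdef
  have hdhm : ∀ n, AEStronglyMeasurable (dh n) mC := by
    intro n
    refine ((Complex.measurable_ofReal.comp_aemeasurable hd).aestronglyMeasurable).mul
      (hhm n).aestronglyMeasurable
  have hdhℒ : ∀ n, MemLp (dh n) 2 mC := by
    intro n
    refine MemLp.of_le hA (hdhm n) ?_
    filter_upwards [hAF'] with z hz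
    rw [hz]
    simp only [dhdef, norm_mul]
    gcongr
    exact hhF' n z
  have hmemS : ∀ n, (hdhℒ n).toLp (dh n) ∈
      {x : Lp ℂ 2 mC | ∃ hh : Lp ℂ 2 mC, ⇑x =ᵐ[mC] fun z => (d z : ℂ) * hh z} := by
    intro n
    refine ⟨(hhℒ n).toLp (h n), ?_⟩
    filter_upwards [(hdhℒ n).coeFn_toLp, (hhℒ n).coeFn_toLp] with z h1 h2
    rw [h1, h2]
  have htend : Tendsto (fun n => (hdhℒ n).toLp (dh n)) atTop (𝓝 (hA.toLp A)) := by
    rw [Lp.tendsto_Lp_iff_tendsto_eLpNorm']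
    have : ∀ n, eLpNorm (⇑((hdhℒ n).toLp (dh n)) - ⇑(hA.toLp A)) 2 mC
        = eLpNorm (fun z => dh n z - A z) 2 mC := by
      intro n
      refine eLpNorm_congr_ae ?_
      filter_upwards [(hdhℒ n).coeFn_toLp, hA.coeFn_toLp] with z h1 h2
      simp [h1, h2]
    simp only [this]
    refine tendsto_eLpNorm_two _ (fun z => (2:ℂ) * A z) (fun n => ((hdhm n).sub hA.1))
      (hA.const_mul 2) (fun n => ?_) ?_
    · filter_upwards [hAF'] with z hz
      have h1 : ‖dh n z‖ ≤ ‖A z‖ := by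
        rw [hz]; simp only [dhdef, norm_mul]; gcongr; exact hhF' n z
      calc ‖dh n z - A z‖ ≤ ‖dh n z‖ + ‖A z‖ := norm_sub_le _ _
        _ ≤ ‖A z‖ + ‖A z‖ := by gcongr
        _ = ‖(2:ℂ) * A z‖ := by rw [norm_mul]; simp; ring
    · filter_upwards [hAF'] with z hz
      have : ∀ᶠ n in atTop, dh n z - A z = 0 := by
        filter_upwards [eventually_ge_atTop ⌈‖F' z‖⌉₊] with n hn
        have hle : ‖F' z‖ ≤ (n:ℝ) := le_trans (Nat.le_ceil _) (by exact_mod_cast hn)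
        simp only [dhdef, hdef]
        rw [if_pos hle, hz, sub_self]
      exact tendsto_const_nhds.congr' (by filter_upwards [this] with n hn; rw [hn])
  exact mem_closure_of_tendsto htend (Eventually.of_forall hmemS)

/-- Let `u` be measurable on `𝕋` with `|u| ≤ 1` a.e., `Δ = (1 - |u|²)^{1/2}`, and let
`K = L² ⊕ closure(ΔL²)`.  Define
`C(f ⊕ g) = (χ̄ u f̄ + χ̄ Δ ḡ) ⊕ (χ̄ Δ f̄ - χ̄ ū ḡ)`.  Then `C` is a conjugation on `K`:
it is conjugate-linear, maps `K` into `K` (it maps `L² × L²` into itself and preserves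
the second-component subspace `closure(ΔL²)`), satisfies `⟨Cx, Cy⟩ = ⟨y, x⟩`, is an
involution a.e., and the bilateral shift `U(f ⊕ g) = χf ⊕ χg` satisfies `CU = U*C`. -/
theorem stmt_11 (u : Circ → ℂ) (hum : AEStronglyMeasurable u mC)
    (hu1 : ∀ᵐ z ∂mC, ‖u z‖ ≤ 1) :
    letI Δ : Circ → ℝ := fun z => Real.sqrt (1 - ‖u z‖ ^ 2)
    letI C1 : (Circ → ℂ) → (Circ → ℂ) → (Circ → ℂ) := fun f g z =>
      (starRingEnd ℂ) (chi z) * (u z * (starRingEnd ℂ) (f z) +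
        (Δ z : ℂ) * (starRingEnd ℂ) (g z))
    letI C2 : (Circ → ℂ) → (Circ → ℂ) → (Circ → ℂ) := fun f g z =>
      (starRingEnd ℂ) (chi z) * ((Δ z : ℂ) * (starRingEnd ℂ) (f z) -
        (starRingEnd ℂ) (u z) * (starRingEnd ℂ) (g z))
    -- `C` maps `L² × L²` into itself
    (∀ f g : Circ → ℂ, MemLp f 2 mC → MemLp g 2 mC →
      MemLp (C1 f g) 2 mC ∧ MemLp (C2 f g) 2 mC) ∧
    -- conjugate-linearity (pointwise)
    (∀ f g f' g' : Circ → ℂ, ∀ z,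
      C1 (f + f') (g + g') z = C1 f g z + C1 f' g' z ∧
      C2 (f + f') (g + g') z = C2 f g z + C2 f' g' z) ∧
    (∀ (c : ℂ) (f g : Circ → ℂ) (z),
      C1 (c • f) (c • g) z = (starRingEnd ℂ) c * C1 f g z ∧
      C2 (c • f) (c • g) z = (starRingEnd ℂ) c * C2 f g z) ∧
    -- isometric: `⟨C(f⊕g), C(f'⊕g')⟩ = ⟨f'⊕g', f⊕g⟩`
    (∀ f g f' g' : Circ → ℂ, MemLp f 2 mC → MemLp g 2 mC →
      MemLp f' 2 mC → MemLp g' 2 mC →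
      (∫ z, (inner ℂ (C1 f g z) (C1 f' g' z) : ℂ) ∂mC) +
        (∫ z, (inner ℂ (C2 f g z) (C2 f' g' z) : ℂ) ∂mC) =
      (∫ z, (inner ℂ (f' z) (f z) : ℂ) ∂mC) + (∫ z, (inner ℂ (g' z) (g z) : ℂ) ∂mC)) ∧
    -- involution (a.e.)
    (∀ f g : Circ → ℂ, MemLp f 2 mC → MemLp g 2 mC →
      C1 (C1 f g) (C2 f g) =ᵐ[mC] f ∧ C2 (C1 f g) (C2 f g) =ᵐ[mC] g) ∧
    -- `C` preserves the subspace `closure(ΔL²)` in the second component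
    (∀ f g : Circ → ℂ, ∀ (hg : MemLp g 2 mC) (hC2 : MemLp (C2 f g) 2 mC),
      hg.toLp g ∈ closDL2 Δ → hC2.toLp (C2 f g) ∈ closDL2 Δ) ∧
    -- `C U = U* C`, where `U(f⊕g) = χf ⊕ χg`
    (∀ f g : Circ → ℂ, ∀ z,
      C1 (fun w => chi w * f w) (fun w => chi w * g w) z =
        (starRingEnd ℂ) (chi z) * C1 f g z ∧
      C2 (fun w => chi w * f w) (fun w => chi w * g w) z =
        (starRingEnd ℂ) (chi z) * C2 f g z) := by
  set Δ : Circ → ℝ := fun z => Real.sqrt (1 - ‖u z‖ ^ 2) with hΔdef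
  set C1 : (Circ → ℂ) → (Circ → ℂ) → (Circ → ℂ) := fun f g z =>
    (starRingEnd ℂ) (chi z) * (u z * (starRingEnd ℂ) (f z) +
      (Δ z : ℂ) * (starRingEnd ℂ) (g z)) with hC1def
  set C2 : (Circ → ℂ) → (Circ → ℂ) → (Circ → ℂ) := fun f g z =>
    (starRingEnd ℂ) (chi z) * ((Δ z : ℂ) * (starRingEnd ℂ) (f z) -
      (starRingEnd ℂ) (u z) * (starRingEnd ℂ) (g z)) with hC2def
  -- basic measurability and bounds
  have hΔm : AEMeasurable Δ mC := by
    exact Real.continuous_sqrt.measurable.comp_aemeasurable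
      ((aemeasurable_const (b := (1:ℝ))).sub ((hum.norm.aemeasurable).pow_const 2))
  have hΔ0 : ∀ z, 0 ≤ Δ z := fun z => Real.sqrt_nonneg _
  have hΔ1 : ∀ z, Δ z ≤ 1 := by
    intro z
    have : (1 : ℝ) - ‖u z‖ ^ 2 ≤ 1 := by nlinarith [sq_nonneg ‖u z‖]
    calc Δ z ≤ Real.sqrt 1 := Real.sqrt_le_sqrt this
      _ = 1 := Real.sqrt_one
  have hΔc : AEStronglyMeasurable (fun z => ((Δ z : ℝ) : ℂ)) mC :=
    (Complex.measurable_ofReal.comp_aemeasurable hΔm).aestronglyMeasurable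
  have hchim : AEStronglyMeasurable (fun z => (starRingEnd ℂ) (chi z)) mC := by
    exact (continuous_star.comp (map_continuous (fourier 1))).aestronglyMeasurable
  have hkey : ∀ᵐ z ∂mC,
      u z * (starRingEnd ℂ) (u z) + ((Δ z : ℝ) : ℂ) * ((Δ z : ℝ) : ℂ) = 1 := by
    filter_upwards [hu1] with z hz
    have h1 : Δ z * Δ z = 1 - ‖u z‖ ^ 2 :=
      Real.mul_self_sqrt (by nlinarith [norm_nonneg (u z)])
    have h2 : u z * (starRingEnd ℂ) (u z) = ((‖u z‖ ^ 2 : ℝ) : ℂ) := by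
      rw [Complex.mul_conj, Complex.normSq_eq_norm_sq]
    rw [h2, ← Complex.ofReal_mul, h1]
    push_cast
    ring
  -- part 1 : `C` maps `L² × L²` to itself
  have part1 : ∀ f g : Circ → ℂ, MemLp f 2 mC → MemLp g 2 mC →
      MemLp (C1 f g) 2 mC ∧ MemLp (C2 f g) 2 mC := by
    intro f g hf hg
    have hfc : AEStronglyMeasurable (fun z => (starRingEnd ℂ) (f z)) mC :=
      continuous_star.comp_aestronglyMeasurable hf.1
    have hgc : AEStronglyMeasurable (fun z => (starRingEnd ℂ) (g z)) mC :=
      continuous_star.comp_aestronglyMeasurable hg.1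
    have huc : AEStronglyMeasurable (fun z => (starRingEnd ℂ) (u z)) mC :=
      continuous_star.comp_aestronglyMeasurable hum
    have hS : MemLp (fun z => ‖f z‖ + ‖g z‖) 2 mC := hf.norm.add hg.norm
    constructor
    · refine MemLp.of_le hS (hchim.mul ((hum.mul hfc).add (hΔc.mul hgc))) ?_
      filter_upwards [hu1] with z hz
      have : ‖C1 f g z‖ ≤ ‖f z‖ + ‖g z‖ := by
        show ‖(starRingEnd ℂ) (chi z) * (u z * (starRingEnd ℂ) (f z) +
          ((Δ z : ℝ):ℂ) * (starRingEnd ℂ) (g z))‖ ≤ _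
        rw [norm_mul, RCLike.norm_conj, chi_norm, one_mul]
        calc ‖u z * (starRingEnd ℂ) (f z) + ((Δ z : ℝ):ℂ) * (starRingEnd ℂ) (g z)‖
            ≤ ‖u z * (starRingEnd ℂ) (f z)‖ + ‖((Δ z : ℝ):ℂ) * (starRingEnd ℂ) (g z)‖ :=
              norm_add_le _ _
          _ ≤ 1 * ‖f z‖ + 1 * ‖g z‖ := by
              rw [norm_mul, norm_mul, RCLike.norm_conj, RCLike.norm_conj]
              gcongr
              · simpa using abs_le_abs (hΔ1 z) (by linarith [hΔ0 z])
          _ = ‖f z‖ + ‖g z‖ := by ring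
      refine this.trans ?_
      exact le_abs_self _
    · refine MemLp.of_le hS (hchim.mul ((hΔc.mul hfc).sub (huc.mul hgc))) ?_
      filter_upwards [hu1] with z hz
      have : ‖C2 f g z‖ ≤ ‖f z‖ + ‖g z‖ := by
        show ‖(starRingEnd ℂ) (chi z) * (((Δ z : ℝ):ℂ) * (starRingEnd ℂ) (f z) -
          (starRingEnd ℂ) (u z) * (starRingEnd ℂ) (g z))‖ ≤ _
        rw [norm_mul, RCLike.norm_conj, chi_norm, one_mul]
        calc ‖((Δ z : ℝ):ℂ) * (starRingEnd ℂ) (f z) -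
              (starRingEnd ℂ) (u z) * (starRingEnd ℂ) (g z)‖
            ≤ ‖((Δ z : ℝ):ℂ) * (starRingEnd ℂ) (f z)‖ +
              ‖(starRingEnd ℂ) (u z) * (starRingEnd ℂ) (g z)‖ := norm_sub_le _ _
          _ ≤ 1 * ‖f z‖ + 1 * ‖g z‖ := by
              rw [norm_mul, norm_mul, RCLike.norm_conj, RCLike.norm_conj, RCLike.norm_conj]
              gcongr
              · simpa using abs_le_abs (hΔ1 z) (by linarith [hΔ0 z])
          _ = ‖f z‖ + ‖g z‖ := by ring
      refine this.trans ?_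
      exact le_abs_self _
  refine ⟨part1, ?_, ?_, ?_, ?_, ?_, ?_⟩
  · -- additivity
    intro f g f' g' z
    constructor <;>
      simp only [hC1def, hC2def, Pi.add_apply, map_add] <;> ring
  · -- conjugate homogeneity
    intro c f g z
    constructor <;>
      simp only [hC1def, hC2def, Pi.smul_apply, smul_eq_mul, map_mul] <;> ring
  · -- isometry
    intro f g f' g' hf hg hf' hg'
    obtain ⟨hC1, hC2⟩ := part1 f g hf hg
    obtain ⟨hC1', hC2'⟩ := part1 f' g' hf' hg'
    have mkint : ∀ (a b : Circ → ℂ) (ha : MemLp a 2 mC) (hb : MemLp b 2 mC),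
        Integrable (fun z => (inner ℂ (a z) (b z) : ℂ)) mC := by
      intro a b ha hb
      have := L2.integrable_inner (𝕜 := ℂ) (ha.toLp a) (hb.toLp b)
      refine this.congr ?_
      filter_upwards [ha.coeFn_toLp, hb.coeFn_toLp] with z h1 h2
      rw [h1, h2]
    rw [← integral_add (mkint _ _ hC1 hC1') (mkint _ _ hC2 hC2'),
      ← integral_add (mkint _ _ hf' hf) (mkint _ _ hg' hg)]
    refine integral_congr_ae ?_
    filter_upwards [hkey] with z hz
    simp only [hC1def, hC2def, RCLike.inner_apply, starRingEnd_apply, star_mul', star_add, star_sub,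
      star_star]
    simp only [← starRingEnd_apply, Complex.conj_ofReal]
    linear_combination ((u z * (starRingEnd ℂ) (u z) + ((Δ z : ℝ):ℂ) * ((Δ z : ℝ):ℂ)) *
        (f z * (starRingEnd ℂ) (f' z) + g z * (starRingEnd ℂ) (g' z))) * chi_conj_mul z +
      (f z * (starRingEnd ℂ) (f' z) + g z * (starRingEnd ℂ) (g' z)) * hz
  · -- involution
    intro f g hf hg
    constructor
    · filter_upwards [hkey] with z hz
      simp only [hC1def, hC2def, starRingEnd_apply, star_mul', star_add, star_sub, star_star]
      simp only [← starRingEnd_apply, Complex.conj_ofReal]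
      linear_combination ((u z * (starRingEnd ℂ) (u z) + ((Δ z : ℝ):ℂ) * ((Δ z : ℝ):ℂ)) *
          f z) * chi_conj_mul z + (f z) * hz
    · filter_upwards [hkey] with z hz
      simp only [hC1def, hC2def, starRingEnd_apply, star_mul', star_add, star_sub, star_star]
      simp only [← starRingEnd_apply, Complex.conj_ofReal]
      linear_combination ((u z * (starRingEnd ℂ) (u z) + ((Δ z : ℝ):ℂ) * ((Δ z : ℝ):ℂ)) *
          g z) * chi_conj_mul z + (g z) * hz
  · -- closure preservation
    intro f g hg hC2 hmem
    set B : Circ → ℂ := fun z => (starRingEnd ℂ) (chi z) * (starRingEnd ℂ) (u z) *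
      (starRingEnd ℂ) (g z) with hBdef
    have hBm : AEStronglyMeasurable B mC :=
      (hchim.mul (continuous_star.comp_aestronglyMeasurable hum)).mul
        (continuous_star.comp_aestronglyMeasurable hg.1)
    have hBbound : ∀ (y : Circ → ℂ), ∀ᵐ z ∂mC,
        ‖(starRingEnd ℂ) (chi z) * (starRingEnd ℂ) (u z) * (starRingEnd ℂ) (y z)‖
          ≤ ‖y z‖ := by
      intro y
      filter_upwards [hu1] with z hz
      rw [norm_mul, norm_mul, RCLike.norm_conj, RCLike.norm_conj, RCLike.norm_conj, chi_norm,
        one_mul]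
      calc ‖u z‖ * ‖y z‖ ≤ 1 * ‖y z‖ := by gcongr
        _ = ‖y z‖ := one_mul _
    have hB : MemLp B 2 mC := MemLp.of_le hg hBm (hBbound g)
    set A : Circ → ℂ := fun z => (starRingEnd ℂ) (chi z) * ((Δ z : ℝ):ℂ) *
      (starRingEnd ℂ) (f z) with hAdef
    have hC2AB : ∀ z, C2 f g z = A z - B z := by
      intro z
      simp only [hC2def, hAdef, hBdef]
      ring
    have hA : MemLp A 2 mC := by
      have : A = fun z => C2 f g z + B z := by
        funext z; rw [hC2AB z]; ring
      rw [this]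
      exact hC2.add hB
    -- `toLp A` lies in the closure of `Δ·L²`
    have hTA : hA.toLp A ∈ closDL2 Δ := by
      refine mem_closDL2 Δ hΔm (fun z => (((Δ z)⁻¹ : ℝ):ℂ) * A z)
        (((Complex.measurable_ofReal.comp_aemeasurable hΔm.inv).aestronglyMeasurable).mul hA.1)
        A hA (Eventually.of_forall fun z => ?_)
      by_cases hz : Δ z = 0
      · simp [hAdef, hz]
      · have hz' : ((Δ z : ℝ):ℂ) ≠ 0 := by exact_mod_cast hz
        push_cast
        field_simp
    simp only [closDL2] at hmem hTA ⊢
    rw [Metric.mem_closure_iff] at hmem hTA ⊢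
    intro ε hε
    obtain ⟨a₁, ha₁S, ha₁⟩ := hTA (ε/2) (by linarith)
    obtain ⟨y, hyS, hy⟩ := hmem (ε/2) (by linarith)
    obtain ⟨h₀, hy0⟩ := hyS
    obtain ⟨h₁, ha₁0⟩ := ha₁S
    set Ty : Circ → ℂ := fun z => (starRingEnd ℂ) (chi z) * (starRingEnd ℂ) (u z) *
      (starRingEnd ℂ) (y z) with hTydef
    have hTym : AEStronglyMeasurable Ty mC :=
      (hchim.mul (continuous_star.comp_aestronglyMeasurable hum)).mul
        (continuous_star.comp_aestronglyMeasurable (Lp.aestronglyMeasurable y))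
    have hTy : MemLp Ty 2 mC := MemLp.of_le (Lp.memLp y) hTym (hBbound y)
    set h₂f : Circ → ℂ := fun z => (starRingEnd ℂ) (chi z) * (starRingEnd ℂ) (u z) *
      (starRingEnd ℂ) (h₀ z) with hh₂def
    have hh₂m : AEStronglyMeasurable h₂f mC :=
      (hchim.mul (continuous_star.comp_aestronglyMeasurable hum)).mul
        (continuous_star.comp_aestronglyMeasurable (Lp.aestronglyMeasurable h₀))
    have hh₂ : MemLp h₂f 2 mC := MemLp.of_le (Lp.memLp h₀) hh₂m (hBbound h₀)
    refine ⟨a₁ - hTy.toLp Ty, ⟨h₁ - hh₂.toLp h₂f, ?_⟩, ?_⟩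
    · filter_upwards [Lp.coeFn_sub a₁ (hTy.toLp Ty), Lp.coeFn_sub h₁ (hh₂.toLp h₂f),
        ha₁0, hy0, hTy.coeFn_toLp, hh₂.coeFn_toLp] with z e1 e2 e3 e4 e5 e6
      rw [e1, e2]
      simp only [Pi.sub_apply]
      rw [e3, e5, e6]
      simp only [hTydef, hh₂def]
      rw [e4]
      simp only [map_mul, Complex.conj_ofReal]
      ring
    · -- distance estimate
      have key1 : hC2.toLp (C2 f g) = hA.toLp A - hB.toLp B := by
        rw [← MemLp.toLp_sub]
        exact MemLp.toLp_congr _ _ (Eventually.of_forall fun z => hC2AB z)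
      rw [key1]
      have hd2 : dist (hB.toLp B) (hTy.toLp Ty) ≤ dist (hg.toLp g) y := by
        rw [Lp.dist_def, Lp.dist_def]
        have e1 : eLpNorm (⇑(hB.toLp B) - ⇑(hTy.toLp Ty)) 2 mC
            = eLpNorm (fun z => B z - Ty z) 2 mC := by
          refine eLpNorm_congr_ae ?_
          filter_upwards [hB.coeFn_toLp, hTy.coeFn_toLp] with z e1 e2
          simp [e1, e2]
        have e2 : eLpNorm (⇑(hg.toLp g) - ⇑y) 2 mC = eLpNorm (fun z => g z - y z) 2 mC := by
          refine eLpNorm_congr_ae ?_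
          filter_upwards [hg.coeFn_toLp] with z e1
          simp [e1]
        rw [e1, e2]
        have hmono : eLpNorm (fun z => B z - Ty z) 2 mC
            ≤ eLpNorm (fun z => g z - y z) 2 mC := by
          refine eLpNorm_mono_ae ?_
          filter_upwards [hu1] with z hz
          have : B z - Ty z = (starRingEnd ℂ) (chi z) * (starRingEnd ℂ) (u z) *
              (starRingEnd ℂ) (g z - y z) := by
            simp only [hBdef, hTydef, map_sub]
            ring
          rw [this, norm_mul, norm_mul, RCLike.norm_conj, RCLike.norm_conj, RCLike.norm_conj,
            chi_norm, one_mul]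
          calc ‖u z‖ * ‖g z - y z‖ ≤ 1 * ‖g z - y z‖ := by gcongr
            _ = ‖g z - y z‖ := one_mul _
        refine ENNReal.toReal_mono ?_ hmono
        have : eLpNorm (fun z => g z - y z) 2 mC < ⊤ := (hg.sub (Lp.memLp y)).2
        exact this.ne
      calc dist (hA.toLp A - hB.toLp B) (a₁ - hTy.toLp Ty)
          ≤ dist (hA.toLp A) a₁ + dist (hB.toLp B) (hTy.toLp Ty) := dist_sub_sub_le _ _ _ _
        _ ≤ dist (hA.toLp A) a₁ + dist (hg.toLp g) y := by gcongr
        _ < ε/2 + ε/2 := by gcongr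
        _ = ε := by ring
  · -- CU = U*C
    intro f g z
    constructor <;> simp only [hC1def, hC2def, map_mul] <;> ring
end
end

section
/- Let g₁, g₂ ∈ L²(𝕋) with g₁ ∈ (H²)^⊥ and g₂ ∈ (H²)^⊥, let u ∈ H^∞ with |u(0)| < 1, and suppose g₁(1 − u(0)·ū) = conj(g₂)·(1 − conj(u(0))·u) almost everywhere on 𝕋. Then g₁ = g₂ = 0. -/
open MeasureTheory Complex ComplexConjugate
open scoped ENNReal

noncomputable section

namespace S17

lemma fc_congr {f g : Circ → ℂ} (h : f =ᵐ[mC] g) (n : ℤ) :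
    fourierCoeff f n = fourierCoeff g n :=
  integral_congr_ae (h.mono fun z hz => by simp only [hz])

lemma norm_fourier_apply (n : ℤ) (z : Circ) : ‖fourier n z‖ = 1 := Circle.norm_coe _

lemma memLp_conj {f : Circ → ℂ} {p : ℝ≥0∞} (hf : MemLp f p mC) :
    MemLp (fun z => conj (f z)) p mC := by
  refine ⟨continuous_star.comp_aestronglyMeasurable hf.1, ?_⟩
  have : eLpNorm (conj f) p mC < ⊤ := by rw [eLpNorm_conj]; exact hf.2
  exact this

lemma memLp_mul_conj {f u : Circ → ℂ} (hf : MemLp f 2 mC) (hu : MemLp u ⊤ mC) :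
    MemLp (fun z => f z * conj (u z)) 2 mC := by
  have h : MemLp ((fun z => conj (u z)) • f) 2 mC := hf.smul (memLp_conj hu)
  have e : (fun z => conj (u z)) • f = fun z => f z * conj (u z) := by
    funext z; simp [mul_comm]
  rwa [e] at h

lemma memLp_mul_fourier {u : Circ → ℂ} (hu : MemLp u ⊤ mC) (n : ℤ) :
    MemLp (fun z => u z * fourier n z) 2 mC := by
  have hu2 : MemLp u 2 mC := hu.mono_exponent le_top
  refine MemLp.of_le hu2 (hu2.1.mul (map_continuous (fourier n)).aestronglyMeasurable) ?_
  refine Filter.Eventually.of_forall fun z => ?_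
  rw [norm_mul, norm_fourier_apply, mul_one]

lemma fc_mul_fourier (u : Circ → ℂ) (n k : ℤ) :
    fourierCoeff (fun z => u z * fourier n z) k = fourierCoeff u (k - n) := by
  refine integral_congr_ae (Filter.Eventually.of_forall fun z => ?_)
  have h : fourier (-(k - n)) z = fourier (-k) z * fourier n z := by
    rw [← fourier_add]; congr 1; ring
  simp only [smul_eq_mul]
  rw [h]; ring

lemma fc_conj (f : Circ → ℂ) (n : ℤ) :
    fourierCoeff (fun z => conj (f z)) n = conj (fourierCoeff f (-n)) := by
  unfold fourierCoeff
  rw [← integral_conj]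
  refine integral_congr_ae (Filter.Eventually.of_forall fun z => ?_)
  simp only [smul_eq_mul, map_mul, ← fourier_neg, neg_neg]

lemma fc_mul_conj {f u : Circ → ℂ} (hf : MemLp f 2 mC) (hu : MemLp u ⊤ mC) (n : ℤ) :
    fourierCoeff (fun z => f z * conj (u z)) n
      = ∑' k : ℤ, conj (fourierCoeff u (k - n)) * fourierCoeff f k := by
  have he : MemLp (fun z => u z * fourier n z) 2 mC := memLp_mul_fourier hu n
  set F := hf.toLp f with hF
  set G := he.toLp _ with hG
  have h1 : fourierCoeff (fun z => f z * conj (u z)) n = @inner ℂ _ _ G F := by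
    rw [MeasureTheory.L2.inner_def]
    refine integral_congr_ae ?_
    filter_upwards [hf.coeFn_toLp, he.coeFn_toLp] with z h1 h2
    rw [RCLike.inner_apply, h1, h2]
    simp only [smul_eq_mul, map_mul, ← fourier_neg]
    ring
  have h2 : @inner ℂ _ _ G F
      = ∑' k : ℤ, conj (fourierBasis.repr G k) * fourierBasis.repr F k := by
    rw [← fourierBasis.tsum_inner_mul_inner G F]
    refine tsum_congr fun k => ?_
    rw [fourierBasis.repr_apply_apply, fourierBasis.repr_apply_apply,
      ← inner_conj_symm (fourierBasis k) G]
    simp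
  rw [h1, h2]
  refine tsum_congr fun k => ?_
  rw [fourierBasis_repr, fourierBasis_repr,
    fc_congr (hf.coeFn_toLp) k, fc_congr (he.coeFn_toLp) k, fc_mul_fourier]

lemma fc_sub_const_mul {f h : Circ → ℂ} (hf : Integrable f mC) (hh : Integrable h mC)
    (c : ℂ) (n : ℤ) :
    fourierCoeff (fun z => f z - c * h z) n
      = fourierCoeff f n - c * fourierCoeff h n := by
  have hbd : ∀ (g : Circ → ℂ), Integrable g mC →
      Integrable (fun z => fourier (-n) z * g z) mC := by
    intro g hg
    refine hg.bdd_mul (map_continuous (fourier (-n))).aestronglyMeasurable (c := 1) (Filter.Eventually.of_forall fun z => ?_)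
    rw [norm_fourier_apply]
  have h1 := hbd f hf
  have h2 := hbd h hh
  unfold fourierCoeff
  simp only [smul_eq_mul]
  have e : ∀ z : Circ, fourier (-n) z * (f z - c * h z)
      = fourier (-n) z * f z - c * (fourier (-n) z * h z) := fun z => by ring
  simp only [e]
  rw [integral_sub h1 (h2.const_mul c), integral_const_mul]

lemma fc_zero_fun (n : ℤ) : fourierCoeff (fun _ : Circ => (0 : ℂ)) n = 0 := by
  simp [fourierCoeff]

lemma kill {f u : Circ → ℂ} (hf : MemLp f 2 mC) (hu : MemLp u ⊤ mC)
    (huH : ∀ n : ℤ, n < 0 → fourierCoeff u n = 0)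
    (hu0 : ‖fourierCoeff u 0‖ < 1)
    (hperp : ∀ n : ℤ, 0 ≤ n → fourierCoeff f n = 0)
    (hrec : ∀ n : ℤ, n < 0 → fourierCoeff f n =
      fourierCoeff u 0 * fourierCoeff (fun z => f z * conj (u z)) n) :
    f =ᵐ[mC] 0 := by
  set u0 := fourierCoeff u 0 with hu0def
  have hfac : (1 : ℂ) - u0 * conj u0 ≠ 0 := by
    intro hcon
    have h1 : u0 * conj u0 = 1 := by linear_combination -hcon
    have h2 : ‖u0 * conj u0‖ = 1 := by rw [h1, norm_one]
    rw [norm_mul, RCLike.norm_conj] at h2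
    nlinarith [norm_nonneg u0]
  have key : ∀ m : ℕ, ∀ n : ℤ, -(m : ℤ) ≤ n → fourierCoeff f n = 0 := by
    intro m
    induction m with
    | zero => intro n hn; exact hperp n (by omega)
    | succ m ih =>
      intro n hn
      rcases le_or_gt (-(m : ℤ)) n with h | h
      · exact ih n h
      · have hn0 : n < 0 := by omega
        have heqn := hrec n hn0
        rw [fc_mul_conj hf hu n] at heqn
        have htsum : ∑' k : ℤ, conj (fourierCoeff u (k - n)) * fourierCoeff f k
            = conj u0 * fourierCoeff f n := by
          rw [tsum_eq_single n ?_]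
          · rw [sub_self]
          · intro k hk
            rcases lt_or_gt_of_ne hk with hlt | hgt
            · rw [huH (k - n) (by omega), map_zero, zero_mul]
            · rw [ih k (by omega), mul_zero]
        rw [htsum] at heqn
        have : ((1 : ℂ) - u0 * conj u0) * fourierCoeff f n = 0 := by
          linear_combination heqn
        rcases mul_eq_zero.1 this with h' | h'
        · exact absurd h' hfac
        · exact h'
  have hall : ∀ n : ℤ, fourierCoeff f n = 0 := by
    intro n
    rcases le_or_gt 0 n with h | h
    · exact hperp n h
    · exact key (-n).toNat n (by omega)
  set F := hf.toLp f with hFdef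
  have hrepr : fourierBasis.repr F = 0 := by
    apply lp.ext
    funext k
    rw [lp.coeFn_zero, Pi.zero_apply, fourierBasis_repr, fc_congr (hf.coeFn_toLp) k, hall]
  have hF : F = 0 := fourierBasis.repr.injective (by rw [hrepr, map_zero])
  have h1 : f =ᵐ[mC] F := hf.coeFn_toLp.symm
  have h2 : (F : Circ → ℂ) =ᵐ[mC] 0 := by rw [hF]; exact Lp.coeFn_zero ℂ 2 mC
  exact h1.trans h2

end S17

/-- Let `g₁, g₂ ∈ L²(𝕋)` belong to `(H²)^⊥` (all nonnegative Fourier coefficients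
vanish), let `u ∈ H^∞` (bounded, with vanishing negative Fourier coefficients) with
`|u(0)| < 1` (where `u(0) = fourierCoeff u 0`), and suppose
`g₁ (1 - u(0) ū) = conj g₂ (1 - conj (u(0)) u)` almost everywhere.  Then `g₁ = g₂ = 0`
(almost everywhere). -/
theorem stmt_17 (g₁ g₂ u : Circ → ℂ)
    (hg₁ : MemLp g₁ 2 mC) (hg₂ : MemLp g₂ 2 mC)
    (hg₁perp : ∀ n : ℤ, 0 ≤ n → fourierCoeff g₁ n = 0)
    (hg₂perp : ∀ n : ℤ, 0 ≤ n → fourierCoeff g₂ n = 0)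
    (hu : MemLp u ⊤ mC)
    (huH : ∀ n : ℤ, n < 0 → fourierCoeff u n = 0)
    (hu0 : ‖fourierCoeff u 0‖ < 1)
    (heq : ∀ᵐ z ∂mC,
      g₁ z * (1 - fourierCoeff u 0 * (starRingEnd ℂ) (u z)) =
        (starRingEnd ℂ) (g₂ z) * (1 - (starRingEnd ℂ) (fourierCoeff u 0) * u z)) :
    g₁ =ᵐ[mC] 0 ∧ g₂ =ᵐ[mC] 0 := by
  set u0 := fourierCoeff u 0 with hu0def
  have hint₁ : Integrable g₁ mC := hg₁.integrable one_le_two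
  have hint₂ : Integrable g₂ mC := hg₂.integrable one_le_two
  have hintm₁ : Integrable (fun z => g₁ z * conj (u z)) mC :=
    (S17.memLp_mul_conj hg₁ hu).integrable one_le_two
  have hintm₂ : Integrable (fun z => g₂ z * conj (u z)) mC :=
    (S17.memLp_mul_conj hg₂ hu).integrable one_le_two
  have hint₂c : Integrable (fun z => conj (g₂ z)) mC :=
    (S17.memLp_conj hg₂).integrable one_le_two
  have hintm₂c : Integrable (fun z => conj (g₂ z * conj (u z))) mC :=
    (S17.memLp_conj (S17.memLp_mul_conj hg₂ hu)).integrable one_le_two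
  -- Fourier coefficients of the two sides agree
  have hC : ∀ n : ℤ,
      fourierCoeff (fun z => g₁ z * (1 - u0 * conj (u z))) n =
      fourierCoeff (fun z => conj (g₂ z) * (1 - conj u0 * u z)) n :=
    fun n => S17.fc_congr heq n
  have eL : (fun z => g₁ z * (1 - u0 * conj (u z)))
      = fun z => g₁ z - u0 * (g₁ z * conj (u z)) := by
    funext z; ring
  have eR : (fun z => conj (g₂ z) * (1 - conj u0 * u z))
      = fun z => conj (g₂ z) - conj u0 * conj (g₂ z * conj (u z)) := by
    funext z; rw [map_mul, Complex.conj_conj]; ring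
  -- the recursion for g₁
  have hrec₁ : ∀ n : ℤ, n < 0 → fourierCoeff g₁ n =
      u0 * fourierCoeff (fun z => g₁ z * conj (u z)) n := by
    intro n hn
    have h := hC n
    rw [eL, eR, S17.fc_sub_const_mul hint₁ hintm₁, S17.fc_sub_const_mul hint₂c hintm₂c] at h
    have h1 : fourierCoeff (fun z => conj (g₂ z)) n = 0 := by
      rw [S17.fc_conj, hg₂perp (-n) (by omega), map_zero]
    have h2 : fourierCoeff (fun z => conj (g₂ z * conj (u z))) n = 0 := by
      rw [S17.fc_conj, S17.fc_mul_conj hg₂ hu]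
      have : ∀ k : ℤ, conj (fourierCoeff u (k - -n)) * fourierCoeff g₂ k = 0 := by
        intro k
        rcases le_or_gt 0 k with hk | hk
        · rw [hg₂perp k hk, mul_zero]
        · rw [huH (k - -n) (by omega), map_zero, zero_mul]
      rw [tsum_congr this, tsum_zero, map_zero]
    rw [h1, h2, mul_zero, sub_zero] at h
    exact sub_eq_zero.mp h
  have hz₁ : g₁ =ᵐ[mC] 0 := S17.kill hg₁ hu huH hu0 hg₁perp hrec₁
  have heq₂ : (fun z => g₂ z - u0 * (g₂ z * conj (u z))) =ᵐ[mC] (fun _ => (0 : ℂ)) := by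
    filter_upwards [heq, hz₁] with z h1 h2
    rw [Pi.zero_apply] at h2
    rw [h2, zero_mul] at h1
    have h3 : conj ((starRingEnd ℂ) (g₂ z) * (1 - (starRingEnd ℂ) u0 * u z)) = conj (0 : ℂ) := by
      rw [← h1]
    simp only [map_zero, map_mul, map_sub, map_one, Complex.conj_conj] at h3
    linear_combination h3
  have hrec₂ : ∀ n : ℤ, n < 0 → fourierCoeff g₂ n =
      u0 * fourierCoeff (fun z => g₂ z * conj (u z)) n := by
    intro n _
    have h := S17.fc_congr heq₂ n
    rw [S17.fc_sub_const_mul hint₂ hintm₂, S17.fc_zero_fun] at h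
    exact sub_eq_zero.mp h
  exact ⟨hz₁, S17.kill hg₂ hu huH hu0 hg₂perp hrec₂⟩
end
end
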